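/- Fix N ≥ 1, m ≥ 1 and real numbers t₀ < T. Let H, h₁,…,h_m : ℝ^N × ℝ^N → ℝ be C², let ν₀,…,ν_m ∈ ℝ, and define the vector fields X(q,p) = ( ∇_pH(q,p), −∇_qH(q,p) − ν₀p ) and Y_i(q,p) = ( ∇_ph_i(q,p), −∇_qh_i(q,p) − ν_i p ) for i = 1,…,m. Let w : ℝ → ℝ^m be C¹ and let φ : [t₀,T] × (ℝ^N × ℝ^N) → ℝ^N × ℝ^N be C² with φ(t₀, z) = z for all z and ∂_tφ(t,z) = X(φ(t,z)) + Σ_{i=1}^m (wⁱ)'(t) Y_i(φ(t,z)) for all (t,z). Then for all t ∈ [t₀,T], all z ∈ ℝ^N × ℝ^N, and all u, v ∈ ℝ^N × ℝ^N: Ω( D_zφ(t,z)u, D_zφ(t,z)v ) = exp( −ν₀(t − t₀) − Σ_{i=1}^m ν_i ( wⁱ(t) − wⁱ(t₀) ) ) · Ω(u, v). (Smooth-noise, pathwise version of Theorem 2.3: the flow of the stochastic forced Hamiltonian system with forcing F = −ν₀p, f_i = −ν_i p is conformally symplectic with factor c_{t,t₀} = exp(−ν₀(t−t₀) − Σ_i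 ν_i(wⁱ(t)−wⁱ(t₀))).) -/

import Mathlib

/- STATEMENT 11: Conformal symplecticity of the flow of a stochastic forced Hamiltonian
   system with forcing F = −ν₀p, f_i = −ν_i p
   (smooth-noise, pathwise version of Theorem 2.3). -/

noncomputable section
open scoped BigOperators

abbrev E (N : ℕ) : Type := EuclideanSpace ℝ (Fin N)

/-- Gradient with respect to the first argument. -/
noncomputable def D1 {N : ℕ} (H : E N × E N → ℝ) (x y : E N) : E N :=
  gradient (fun x' => H (x', y)) x

/-- Gradient with respect to the second argument. -/
noncomputable def D2 {N : ℕ} (H : E N × E N → ℝ) (x y : E N) : E N :=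
  gradient (fun y' => H (x, y')) y

/-- The canonical symplectic bilinear form on `ℝ^N × ℝ^N`. -/
noncomputable def Omega {N : ℕ} (u v : E N × E N) : ℝ :=
  (inner ℝ u.1 v.2 : ℝ) - (inner ℝ u.2 v.1 : ℝ)

open ContinuousLinearMap InnerProductSpace

noncomputable def pg1 (N : ℕ) : ((E N × E N) →L[ℝ] ℝ) →L[ℝ] E N :=
  ((toDual ℝ (E N)).symm.toContinuousLinearEquiv.toContinuousLinearMap).comp
    ((compL ℝ (E N) (E N × E N) ℝ).flip (inl ℝ (E N) (E N)))

noncomputable def pg2 (N : ℕ) : ((E N × E N) →L[ℝ] ℝ) →L[ℝ] E N :=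
  ((toDual ℝ (E N)).symm.toContinuousLinearEquiv.toContinuousLinearMap).comp
    ((compL ℝ (E N) (E N × E N) ℝ).flip (inr ℝ (E N) (E N)))

lemma pg1_inner {N : ℕ} (T : (E N × E N) →L[ℝ] ℝ) (a : E N) :
    (inner ℝ (pg1 N T) a : ℝ) = T (a, 0) := by
  simp [pg1, toDual_symm_apply]

lemma pg2_inner {N : ℕ} (T : (E N × E N) →L[ℝ] ℝ) (a : E N) :
    (inner ℝ (pg2 N T) a : ℝ) = T (0, a) := by
  simp [pg2, toDual_symm_apply]

lemma D1_eq {N : ℕ} (K : E N × E N → ℝ) (hK : ContDiff ℝ 2 K) (z : E N × E N) :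
    D1 K z.1 z.2 = pg1 N (fderiv ℝ K z) := by
  have hd : HasFDerivAt (fun x' : E N => K (x', z.2))
      ((fderiv ℝ K z).comp (inl ℝ (E N) (E N))) z.1 := by
    have := ((hK.differentiable (by norm_num) z).hasFDerivAt).comp (f := fun x' : E N => (x', z.2)) z.1
      (hasFDerivAt_prodMk_left z.1 z.2)
    exact this
  rw [D1, gradient, hd.fderiv]
  simp [pg1]

lemma D2_eq {N : ℕ} (K : E N × E N → ℝ) (hK : ContDiff ℝ 2 K) (z : E N × E N) :
    D2 K z.1 z.2 = pg2 N (fderiv ℝ K z) := by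
  have hd : HasFDerivAt (fun y' : E N => K (z.1, y'))
      ((fderiv ℝ K z).comp (inr ℝ (E N) (E N))) z.2 := by
    have := ((hK.differentiable (by norm_num) z).hasFDerivAt).comp (f := fun y' : E N => (z.1, y')) z.2
      (hasFDerivAt_prodMk_right z.1 z.2)
    exact this
  rw [D2, gradient, hd.fderiv]
  simp [pg2]

/-- Infinitesimal conformal symplecticity of the forced Hamiltonian vector field. -/
lemma key_vf {N : ℕ} (K : E N × E N → ℝ) (hK : ContDiff ℝ 2 K) (ν : ℝ) :
    ∃ A : E N × E N → (E N × E N) →L[ℝ] (E N × E N),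
      (∀ z, HasFDerivAt (fun z : E N × E N =>
          ((D2 K z.1 z.2, -D1 K z.1 z.2 - ν • z.2) : E N × E N)) (A z) z) ∧
      (∀ z u v, Omega (A z u) v + Omega u (A z v) = -ν * Omega u v) := by
  set K' := fderiv ℝ K with hK'def
  have hK1 : ContDiff ℝ 1 K' := hK.fderiv_right (by norm_num)
  have hK'd : ∀ z, HasFDerivAt K' (fderiv ℝ K' z) z := fun z =>
    ((hK1.differentiable (by norm_num)) z).hasFDerivAt
  refine ⟨fun z => ((pg2 N).comp (fderiv ℝ K' z)).prod
      (-((pg1 N).comp (fderiv ℝ K' z)) - ν • (snd ℝ (E N) (E N))), ?_, ?_⟩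
  · intro z
    have h2 : HasFDerivAt (fun z : E N × E N => pg2 N (K' z))
        ((pg2 N).comp (fderiv ℝ K' z)) z := ((pg2 N).hasFDerivAt).comp z (hK'd z)
    have h1 : HasFDerivAt (fun z : E N × E N => -(pg1 N (K' z)) - ν • z.2)
        (-((pg1 N).comp (fderiv ℝ K' z)) - ν • (snd ℝ (E N) (E N))) z := by
      have ha : HasFDerivAt (fun z : E N × E N => pg1 N (K' z))
          ((pg1 N).comp (fderiv ℝ K' z)) z := ((pg1 N).hasFDerivAt).comp z (hK'd z)
      have hb : HasFDerivAt (fun z : E N × E N => ν • z.2)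
          (ν • (snd ℝ (E N) (E N))) z := (hasFDerivAt_snd).const_smul ν
      exact ha.neg.sub hb
    have := h2.prodMk h1
    apply this.congr_of_eventuallyEq
    filter_upwards with x
    rw [D1_eq K hK x, D2_eq K hK x]
  · intro z u v
    set B := fderiv ℝ K' z with hB
    have hsymm : ∀ a b, B a b = B b a := fun a b =>
      second_derivative_symmetric (fun y => (hK.differentiable (by norm_num) y).hasFDerivAt)
        (hK'd z) a b
    have happ : ∀ a : E N × E N, (a.1, (0 : E N)) + ((0 : E N), a.2) = a := by
      intro a; ext <;> simp
    have hBu : ∀ a : E N × E N, B a (a.1, (0:E N)) = 0 ∨ True := fun _ => Or.inr trivial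
    simp only [Omega, prod_apply, coe_comp', Function.comp_apply, neg_apply, sub_apply,
      smul_apply, coe_snd', Pi.neg_apply, Pi.sub_apply, Pi.smul_apply]
    rw [pg2_inner]
    have e1 : (inner ℝ (-(pg1 N (B u)) - ν • u.2) v.1 : ℝ)
        = -(B u) (v.1, 0) - ν * (inner ℝ u.2 v.1 : ℝ) := by
      rw [inner_sub_left, inner_neg_left, pg1_inner, inner_smul_left]
      norm_num
    have e2 : (inner ℝ u.1 (-(pg1 N (B v)) - ν • v.2) : ℝ)
        = -(B v) (u.1, 0) - ν * (inner ℝ u.1 v.2 : ℝ) := by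
      rw [inner_sub_right, inner_neg_right, real_inner_comm (pg1 N (B v)) u.1, pg1_inner,
        real_inner_smul_right]
    simp only [← hB]
    rw [e1, e2, real_inner_comm (pg2 N (B v)) u.2, pg2_inner]
    have hadd1 : (B u) (v.1, (0:E N)) + (B u) ((0:E N), v.2) = B u v := by
      rw [← map_add]; rw [happ v]
    have hadd2 : (B v) (u.1, (0:E N)) + (B v) ((0:E N), u.2) = B v u := by
      rw [← map_add]; rw [happ u]
    linarith [hadd1, hadd2, hsymm u v]

lemma Omega_add_left {N : ℕ} (a b v : E N × E N) : Omega (a + b) v = Omega a v + Omega b v := by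
  simp only [Omega, Prod.fst_add, Prod.snd_add, inner_add_left]; ring

lemma Omega_smul_left {N : ℕ} (c : ℝ) (a v : E N × E N) : Omega (c • a) v = c * Omega a v := by
  simp only [Omega, Prod.smul_fst, Prod.smul_snd, real_inner_smul_left]; ring

lemma Omega_add_right {N : ℕ} (u a b : E N × E N) : Omega u (a + b) = Omega u a + Omega u b := by
  simp only [Omega, Prod.fst_add, Prod.snd_add, inner_add_right]; ring

lemma Omega_smul_right {N : ℕ} (c : ℝ) (u a : E N × E N) : Omega u (c • a) = c * Omega u a := by
  simp only [Omega, Prod.smul_fst, Prod.smul_snd, real_inner_smul_right]; ring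

lemma Omega_sum_left {N m : ℕ} (f : Fin m → E N × E N) (v : E N × E N) :
    Omega (∑ i, f i) v = ∑ i, Omega (f i) v := by
  classical
  induction (Finset.univ : Finset (Fin m)) using Finset.induction with
  | empty => simp [Omega]
  | insert _ _ hx ih => rw [Finset.sum_insert hx, Finset.sum_insert hx, Omega_add_left, ih]

lemma Omega_sum_right {N m : ℕ} (u : E N × E N) (f : Fin m → E N × E N) :
    Omega u (∑ i, f i) = ∑ i, Omega u (f i) := by
  classical
  induction (Finset.univ : Finset (Fin m)) using Finset.induction with
  | empty => simp [Omega]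
  | insert _ _ hx ih => rw [Finset.sum_insert hx, Finset.sum_insert hx, Omega_add_right, ih]


theorem conformal_symplecticity_pathwise
    {N m : ℕ} (hN : 1 ≤ N) (hm : 1 ≤ m)
    {t₀ T : ℝ} (ht : t₀ < T)
    (H : E N × E N → ℝ) (h : Fin m → E N × E N → ℝ)
    (hH : ContDiff ℝ 2 H) (hh : ∀ i, ContDiff ℝ 2 (h i))
    (ν₀ : ℝ) (ν : Fin m → ℝ)
    -- the drift and noise vector fields:
    (X : E N × E N → E N × E N)
    (hX : ∀ z : E N × E N, X z = (D2 H z.1 z.2, -D1 H z.1 z.2 - ν₀ • z.2))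
    (Y : Fin m → E N × E N → E N × E N)
    (hY : ∀ i, ∀ z : E N × E N, Y i z = (D2 (h i) z.1 z.2, -D1 (h i) z.1 z.2 - ν i • z.2))
    -- the smooth noise path:
    (w : Fin m → ℝ → ℝ) (hw : ∀ i, ContDiff ℝ 1 (w i))
    -- the flow map:
    (φ : ℝ → E N × E N → E N × E N)
    (hφC2 : ContDiff ℝ 2 (fun tz : ℝ × (E N × E N) => φ tz.1 tz.2))
    (hφ0 : ∀ z : E N × E N, φ t₀ z = z)
    (hφ : ∀ z : E N × E N, ∀ t ∈ Set.Icc t₀ T,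
        HasDerivAt (fun t' => φ t' z)
          (X (φ t z) + ∑ i, deriv (w i) t • Y i (φ t z)) t) :
    ∀ t ∈ Set.Icc t₀ T, ∀ (z u v : E N × E N),
      Omega (fderiv ℝ (φ t) z u) (fderiv ℝ (φ t) z v)
        = Real.exp (-ν₀ * (t - t₀) - ∑ i, ν i * (w i t - w i t₀)) * Omega u v := by
  classical
  intro t htT z u v
  obtain ⟨AX, hAXd, hAXc⟩ := key_vf H hH ν₀
  have hkeyY := fun i => key_vf (h i) (hh i) (ν i)
  choose AY hAYd hAYc using hkeyY
  have hXd : ∀ y, HasFDerivAt X (AX y) y := by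
    intro y
    have hXeq : X = fun z : E N × E N => ((D2 H z.1 z.2, -D1 H z.1 z.2 - ν₀ • z.2) : E N × E N) :=
      funext hX
    rw [hXeq]; exact hAXd y
  have hYd : ∀ i y, HasFDerivAt (Y i) (AY i y) y := by
    intro i y
    have hYeq : Y i = fun z : E N × E N =>
        ((D2 (h i) z.1 z.2, -D1 (h i) z.1 z.2 - ν i • z.2) : E N × E N) := funext (hY i)
    rw [hYeq]; exact hAYd i y
  set F : ℝ × (E N × E N) → E N × E N := fun p => φ p.1 p.2 with hFdef
  have hFdiff : Differentiable ℝ F := hφC2.differentiable (by norm_num)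
  have hF1 : ContDiff ℝ 1 (fderiv ℝ F) := hφC2.fderiv_right (by norm_num)
  have hF'd : ∀ p, HasFDerivAt (fderiv ℝ F) (fderiv ℝ (fderiv ℝ F) p) p :=
    fun p => ((hF1.differentiable (by norm_num)) p).hasFDerivAt
  have hsymm : ∀ p (a b : ℝ × (E N × E N)),
      fderiv ℝ (fderiv ℝ F) p a b = fderiv ℝ (fderiv ℝ F) p b a :=
    fun p a b => second_derivative_symmetric (fun y => (hFdiff y).hasFDerivAt) (hF'd p) a b
  -- space derivative of φ s
  have hphi : ∀ (s : ℝ) (z' : E N × E N), HasFDerivAt (φ s)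
      ((fderiv ℝ F (s, z')).comp (ContinuousLinearMap.inr ℝ ℝ (E N × E N))) z' := by
    intro s z'
    exact (hFdiff (s, z')).hasFDerivAt.comp z' (hasFDerivAt_prodMk_right s z')
  set U : ℝ → E N × E N := fun s => fderiv ℝ F (s, z) ((0 : ℝ), u) with hUdef
  set V2 : ℝ → E N × E N := fun s => fderiv ℝ F (s, z) ((0 : ℝ), v) with hV2def
  -- time derivative of U, V2 (everywhere)
  have hUd : ∀ (a : E N × E N) (s : ℝ),
      HasDerivAt (fun s' => fderiv ℝ F (s', z) ((0 : ℝ), a))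
        (fderiv ℝ (fderiv ℝ F) (s, z) ((1 : ℝ), (0 : E N × E N)) ((0 : ℝ), a)) s := by
    intro a s
    have h1 : HasDerivAt (fun s' : ℝ => (s', z)) ((1 : ℝ), (0 : E N × E N)) s :=
      (hasDerivAt_id s).prodMk (hasDerivAt_const s z)
    have h2 := (hF'd (s, z)).comp_hasDerivAt s h1
    have h3 := (ContinuousLinearMap.apply ℝ (E N × E N)
      (((0 : ℝ), a) : ℝ × (E N × E N))).hasFDerivAt.comp_hasDerivAt s h2
    exact h3
  -- identification of the mixed second derivative on the Icc
  have hmix : ∀ s ∈ Set.Icc t₀ T, ∀ a : E N × E N,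
      fderiv ℝ (fderiv ℝ F) (s, z) ((1 : ℝ), (0 : E N × E N)) ((0 : ℝ), a)
        = AX (φ s z) (fderiv ℝ F (s, z) ((0 : ℝ), a))
          + ∑ i, deriv (w i) s • AY i (φ s z) (fderiv ℝ F (s, z) ((0 : ℝ), a)) := by
    intro s hs a
    set Dphi : (E N × E N) →L[ℝ] E N × E N :=
      (fderiv ℝ F (s, z)).comp (ContinuousLinearMap.inr ℝ ℝ (E N × E N)) with hDphi
    have claim1 : ∀ z' : E N × E N,
        fderiv ℝ F (s, z') ((1 : ℝ), (0 : E N × E N))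
          = X (φ s z') + ∑ i, deriv (w i) s • Y i (φ s z') := by
      intro z'
      have hts : HasDerivAt (fun t' => F (t', z'))
          (fderiv ℝ F (s, z') ((1 : ℝ), (0 : E N × E N))) s :=
        (hFdiff (s, z')).hasFDerivAt.comp_hasDerivAt (f := fun t' => (t', z')) s
          ((hasDerivAt_id s).prodMk (hasDerivAt_const s z'))
      exact hts.unique (hφ z' s hs)
    have hMder : HasFDerivAt (fun z' => fderiv ℝ F (s, z') ((1 : ℝ), (0 : E N × E N)))
        (((ContinuousLinearMap.apply ℝ (E N × E N)
            (((1 : ℝ), (0 : E N × E N)) : ℝ × (E N × E N))).comp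
          (fderiv ℝ (fderiv ℝ F) (s, z))).comp
          (ContinuousLinearMap.inr ℝ ℝ (E N × E N))) z := by
      have hA0 := (ContinuousLinearMap.apply ℝ (E N × E N)
          (((1 : ℝ), (0 : E N × E N)) : ℝ × (E N × E N))).hasFDerivAt.comp (s, z) (hF'd (s, z))
      have hA : HasFDerivAt (fun p => fderiv ℝ F p ((1 : ℝ), (0 : E N × E N)))
          ((ContinuousLinearMap.apply ℝ (E N × E N)
            (((1 : ℝ), (0 : E N × E N)) : ℝ × (E N × E N))).comp
            (fderiv ℝ (fderiv ℝ F) (s, z))) (s, z) :=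
        hA0.congr_of_eventuallyEq (Filter.Eventually.of_forall fun p => rfl)
      have hB0 := hA.comp z (hasFDerivAt_prodMk_right s z)
      exact hB0.congr_of_eventuallyEq (Filter.Eventually.of_forall fun z' => rfl)
    have hRder : HasFDerivAt (fun z' => X (φ s z') + ∑ i, deriv (w i) s • Y i (φ s z'))
        ((AX (φ s z)).comp Dphi + ∑ i, deriv (w i) s • ((AY i (φ s z)).comp Dphi)) z := by
      have h1 : HasFDerivAt (fun z' => X (φ s z')) ((AX (φ s z)).comp Dphi) z :=
        (hXd (φ s z)).comp z (hphi s z)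
      have h2 : ∀ i : Fin m, HasFDerivAt (fun z' => deriv (w i) s • Y i (φ s z'))
          (deriv (w i) s • ((AY i (φ s z)).comp Dphi)) z :=
        fun i => ((hYd i (φ s z)).comp z (hphi s z)).const_smul (deriv (w i) s)
      exact h1.add (HasFDerivAt.fun_sum fun i _ => h2 i)
    have hfeq : (fun z' => fderiv ℝ F (s, z') ((1 : ℝ), (0 : E N × E N)))
        = fun z' => X (φ s z') + ∑ i, deriv (w i) s • Y i (φ s z') := funext claim1
    have huniq := hMder.unique (hfeq ▸ hRder)
    have := congrArg (fun (L : (E N × E N) →L[ℝ] E N × E N) => L a) huniq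
    simp only [ContinuousLinearMap.coe_comp', Function.comp_apply,
      ContinuousLinearMap.inr_apply, ContinuousLinearMap.apply_apply,
      ContinuousLinearMap.add_apply, ContinuousLinearMap.sum_apply,
      ContinuousLinearMap.smul_apply] at this
    rw [hsymm (s, z) ((1 : ℝ), (0 : E N × E N)) ((0 : ℝ), a)]
    exact this
  -- derivative of U and V2 on the interval, in closed form
  have hUdI : ∀ s ∈ Set.Icc t₀ T, HasDerivAt U
      (AX (φ s z) (U s) + ∑ i, deriv (w i) s • AY i (φ s z) (U s)) s := by
    intro s hs
    have := hUd u s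
    rw [hmix s hs u] at this
    exact this
  have hVdI : ∀ s ∈ Set.Icc t₀ T, HasDerivAt V2
      (AX (φ s z) (V2 s) + ∑ i, deriv (w i) s • AY i (φ s z) (V2 s)) s := by
    intro s hs
    have := hUd v s
    rw [hmix s hs v] at this
    exact this
  -- the symplectic product and its derivative
  set g : ℝ → ℝ := fun s => Omega (U s) (V2 s) with hgdef
  have hgd : ∀ s ∈ Set.Icc t₀ T,
      HasDerivAt g (-(ν₀ + ∑ i, ν i * deriv (w i) s) * g s) s := by
    intro s hs
    set DU := AX (φ s z) (U s) + ∑ i, deriv (w i) s • AY i (φ s z) (U s) with hDU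
    set DV := AX (φ s z) (V2 s) + ∑ i, deriv (w i) s • AY i (φ s z) (V2 s) with hDV
    have hU1 : HasDerivAt (fun s' => (U s').1) DU.1 s := by
      have := (ContinuousLinearMap.fst ℝ (E N) (E N)).hasFDerivAt.comp_hasDerivAt s (hUdI s hs)
      exact this
    have hU2 : HasDerivAt (fun s' => (U s').2) DU.2 s := by
      have := (ContinuousLinearMap.snd ℝ (E N) (E N)).hasFDerivAt.comp_hasDerivAt s (hUdI s hs)
      exact this
    have hV1 : HasDerivAt (fun s' => (V2 s').1) DV.1 s := by
      have := (ContinuousLinearMap.fst ℝ (E N) (E N)).hasFDerivAt.comp_hasDerivAt s (hVdI s hs)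
      exact this
    have hV2' : HasDerivAt (fun s' => (V2 s').2) DV.2 s := by
      have := (ContinuousLinearMap.snd ℝ (E N) (E N)).hasFDerivAt.comp_hasDerivAt s (hVdI s hs)
      exact this
    have hinner1 := (HasDerivAt.inner ℝ hU1 hV2')
    have hinner2 := (HasDerivAt.inner ℝ hU2 hV1)
    have hgg : HasDerivAt g
        ((inner ℝ (U s).1 DV.2 + inner ℝ DU.1 (V2 s).2
          - (inner ℝ (U s).2 DV.1 + inner ℝ DU.2 (V2 s).1) : ℝ)) s := by
      exact hinner1.sub hinner2
    have hval : (inner ℝ (U s).1 DV.2 + inner ℝ DU.1 (V2 s).2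
          - (inner ℝ (U s).2 DV.1 + inner ℝ DU.2 (V2 s).1) : ℝ)
        = -(ν₀ + ∑ i, ν i * deriv (w i) s) * g s := by
      have hlhs : (inner ℝ (U s).1 DV.2 + inner ℝ DU.1 (V2 s).2
            - (inner ℝ (U s).2 DV.1 + inner ℝ DU.2 (V2 s).1) : ℝ)
          = Omega DU (V2 s) + Omega (U s) DV := by
        simp only [Omega]; ring
      rw [hlhs, hDU, hDV, Omega_add_left, Omega_add_right, Omega_sum_left, Omega_sum_right]
      simp only [Omega_smul_left, Omega_smul_right]
      have hsum : ∑ i, deriv (w i) s * Omega (AY i (φ s z) (U s)) (V2 s)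
            + ∑ i, deriv (w i) s * Omega (U s) (AY i (φ s z) (V2 s))
          = ∑ i, deriv (w i) s * (Omega (AY i (φ s z) (U s)) (V2 s)
            + Omega (U s) (AY i (φ s z) (V2 s))) := by
        rw [← Finset.sum_add_distrib]
        exact Finset.sum_congr rfl fun i _ => by ring
      have hXc := hAXc (φ s z) (U s) (V2 s)
      have hcalc : Omega (AX (φ s z) (U s)) (V2 s)
            + ∑ i, deriv (w i) s * Omega (AY i (φ s z) (U s)) (V2 s)
            + (Omega (U s) (AX (φ s z) (V2 s))
            + ∑ i, deriv (w i) s * Omega (U s) (AY i (φ s z) (V2 s)))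
          = (Omega (AX (φ s z) (U s)) (V2 s) + Omega (U s) (AX (φ s z) (V2 s)))
            + ∑ i, deriv (w i) s * (Omega (AY i (φ s z) (U s)) (V2 s)
            + Omega (U s) (AY i (φ s z) (V2 s))) := by
        rw [← hsum]; ring
      rw [hcalc, hXc]
      have : ∑ i, deriv (w i) s * (Omega (AY i (φ s z) (U s)) (V2 s)
            + Omega (U s) (AY i (φ s z) (V2 s)))
          = ∑ i, deriv (w i) s * (-ν i * Omega (U s) (V2 s)) :=
        Finset.sum_congr rfl fun i _ => by rw [hAYc i (φ s z) (U s) (V2 s)]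
      rw [this]
      have h2 : ∑ i, deriv (w i) s * (-ν i * Omega (U s) (V2 s))
          = (∑ i, ν i * deriv (w i) s) * (-(Omega (U s) (V2 s))) := by
        rw [Finset.sum_mul]
        exact Finset.sum_congr rfl fun i _ => by ring
      rw [h2]
      show _ = -(ν₀ + ∑ i, ν i * deriv (w i) s) * Omega (U s) (V2 s)
      ring
    rw [hval] at hgg
    exact hgg
  -- the integrating factor
  set cfun : ℝ → ℝ := fun s => ν₀ * (s - t₀) + ∑ i, ν i * (w i s - w i t₀) with hcf
  have hcd : ∀ s : ℝ, HasDerivAt cfun (ν₀ + ∑ i, ν i * deriv (w i) s) s := by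
    intro s
    have h1 : HasDerivAt (fun s' : ℝ => ν₀ * (s' - t₀)) (ν₀ * 1) s :=
      ((hasDerivAt_id s).sub_const t₀).const_mul ν₀
    have h2 : ∀ i : Fin m, HasDerivAt (fun s' : ℝ => ν i * (w i s' - w i t₀))
        (ν i * deriv (w i) s) s := fun i =>
      ((((hw i).differentiable (by norm_num) s).hasDerivAt).sub_const (w i t₀)).const_mul (ν i)
    have hsum : HasDerivAt (fun s' : ℝ => ∑ i, ν i * (w i s' - w i t₀))
        (∑ i, ν i * deriv (w i) s) s := HasDerivAt.fun_sum fun i _ => h2 i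
    have := h1.add hsum
    simpa [Pi.add_def] using this
  set hfun : ℝ → ℝ := fun s => Real.exp (cfun s) * g s with hhf
  have hhd : ∀ s ∈ Set.Icc t₀ T, HasDerivAt hfun 0 s := by
    intro s hs
    have hexp : HasDerivAt (fun s' => Real.exp (cfun s'))
        (Real.exp (cfun s) * (ν₀ + ∑ i, ν i * deriv (w i) s)) s := (hcd s).exp
    have hprod := hexp.mul (hgd s hs)
    have hzero : Real.exp (cfun s) * (ν₀ + ∑ i, ν i * deriv (w i) s) * g s
        + Real.exp (cfun s) * (-(ν₀ + ∑ i, ν i * deriv (w i) s) * g s) = 0 := by ring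
    rw [hzero] at hprod
    exact hprod
  -- continuity of hfun
  have hUc : ∀ a : E N × E N, Continuous (fun s => fderiv ℝ F (s, z) ((0 : ℝ), a)) := by
    intro a
    exact (ContinuousLinearMap.apply ℝ (E N × E N)
        (((0 : ℝ), a) : ℝ × (E N × E N))).continuous.comp
      ((hF1.continuous).comp (continuous_id.prodMk continuous_const))
  have hgc : Continuous g := by
    have h1 : Continuous U := hUc u
    have h2 : Continuous V2 := hUc v
    exact ((continuous_fst.comp h1).inner (continuous_snd.comp h2)).sub
      ((continuous_snd.comp h1).inner (continuous_fst.comp h2))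
  have hcc : Continuous cfun := by
    refine ((continuous_const.mul (continuous_id.sub continuous_const)).add ?_)
    exact continuous_finset_sum _ fun i _ =>
      (continuous_const.mul ((hw i).continuous.sub continuous_const))
  have hhc : Continuous hfun := (Real.continuous_exp.comp hcc).mul hgc
  -- constancy on [t₀, t]
  have hconst := constant_of_has_deriv_right_zero (f := hfun) (a := t₀) (b := t)
    (hhc.continuousOn)
    (fun x hx => (hhd x ⟨hx.1, le_trans (le_of_lt hx.2) htT.2⟩).hasDerivWithinAt)
  have heqt : hfun t = hfun t₀ := hconst t ⟨htT.1, le_rfl⟩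
  -- initial values
  have hid : HasFDerivAt (φ t₀) (ContinuousLinearMap.id ℝ (E N × E N)) z :=
    (hasFDerivAt_id z).congr_of_eventuallyEq (Filter.Eventually.of_forall fun x => hφ0 x)
  have hDid : (fderiv ℝ F (t₀, z)).comp (ContinuousLinearMap.inr ℝ ℝ (E N × E N))
      = ContinuousLinearMap.id ℝ (E N × E N) := (hphi t₀ z).unique hid
  have hUt0 : U t₀ = u := by
    have := congrArg (fun L : (E N × E N) →L[ℝ] E N × E N => L u) hDid
    simpa using this
  have hVt0 : V2 t₀ = v := by
    have := congrArg (fun L : (E N × E N) →L[ℝ] E N × E N => L v) hDid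
    simpa using this
  have hc0 : cfun t₀ = 0 := by simp [hcf]
  have hfun0 : hfun t₀ = Omega u v := by
    rw [hhf]; simp only [hc0, Real.exp_zero, one_mul, hgdef, hUt0, hVt0]
  rw [hfun0] at heqt
  -- identify fderiv of φ t with U t, V2 t
  rw [(hphi t z).fderiv]
  simp only [ContinuousLinearMap.coe_comp', Function.comp_apply,
    ContinuousLinearMap.inr_apply]
  show Omega (U t) (V2 t) = _
  have hexpeq : -ν₀ * (t - t₀) - ∑ i, ν i * (w i t - w i t₀) = -(cfun t) := by
    rw [hcf]; ring
  rw [hexpeq]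
  have hgt : Omega (U t) (V2 t) = g t := rfl
  rw [hgt, ← heqt, hhf]
  show g t = Real.exp (-cfun t) * (Real.exp (cfun t) * g t)
  rw [← mul_assoc, ← Real.exp_add]
  simp
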